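/- Let G be a finitely generated group with a central subgroup ⟨σ⟩ ≅ ℤ. If G admits a surjection ρ onto a finitely generated nilpotent group N with ρ(σ) of infinite order, then for every d ≥ 1 the quotient G/⟨σ^d⟩ admits a finite quotient F_d in which the image of σ has order exactly d. -/

import Mathlib

open Subgroup
open scoped commutatorElement IsMulCommutative

/-- A subgroup contained in the center is normal. -/
private lemma normal_of_le_center' {G : Type*} [Group G] {H : Subgroup G}
    (h : H ≤ Subgroup.center G) : H.Normal :=
  ⟨fun n hn g => by
    have hc := Subgroup.mem_center_iff.mp (h hn) g
    have : g * n * g⁻¹ = n := by rw [hc]; group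
    rwa [this]⟩

/-- If the image of `x` in `G ⧸ center G` is central, then all commutators `⁅x, h⁆`
are central. -/
private lemma comm_mem_center {G : Type*} [Group G] (x h : G)
    (hx : ((x : G ⧸ Subgroup.center G)) ∈ Subgroup.center (G ⧸ Subgroup.center G)) :
    ⁅x, h⁆ ∈ Subgroup.center G := by
  have h1 : (QuotientGroup.mk' (Subgroup.center G)) ⁅x, h⁆ = 1 := by
    rw [map_commutatorElement]
    exact commutatorElement_eq_one_iff_commute.mpr
      (Subgroup.mem_center_iff.mp hx ((QuotientGroup.mk' (Subgroup.center G)) h)).symm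
  rwa [← MonoidHom.mem_ker, QuotientGroup.ker_mk'] at h1

private lemma comm_pow {G : Type*} [Group G] (x h : G)
    (hc : ∀ g : G, ⁅x, g⁆ ∈ Subgroup.center G) (n : ℕ) : ⁅x ^ n, h⁆ = ⁅x, h⁆ ^ n := by
  induction n with
  | zero => simp
  | succ n ih =>
    have key : ⁅x ^ (n + 1), h⁆ = x ^ n * ⁅x, h⁆ * (x ^ n)⁻¹ * ⁅x ^ n, h⁆ := by
      simp only [commutatorElement_def]
      group
    rw [key, ih, Subgroup.mem_center_iff.mp (hc h) (x ^ n), mul_inv_cancel_right,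
      ← pow_succ']

/-- A finitely generated nilpotent group whose center is torsion is itself torsion. -/
private lemma isTorsion_of_center_torsion :
    ∀ (G : Type*) [Group G] [Group.IsNilpotent G], Group.FG G →
      (∀ z ∈ Subgroup.center G, IsOfFinOrder z) → Monoid.IsTorsion G := by
  intro G _ _
  apply @nilpotent_center_quotient_ind _ G _ _ <;> clear! G
  · intro G _ _ _ _ g
    have : g = 1 := Subsingleton.elim g 1
    rw [this]; exact IsOfFinOrder.one
  · intro G _ _ ih hFG hZ
    haveI := hFG
    -- the center of the quotient by the center is torsion
    have hZQ : ∀ z ∈ Subgroup.center (G ⧸ Subgroup.center G), IsOfFinOrder z := by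
      intro z hz
      obtain ⟨x, rfl⟩ := QuotientGroup.mk'_surjective (Subgroup.center G) z
      have hc : ∀ g : G, ⁅x, g⁆ ∈ Subgroup.center G := fun g => comm_mem_center x g hz
      obtain ⟨S, hS⟩ := Group.FG.out (G := G)
      have ht0 : ∀ s ∈ S, 0 < orderOf ⁅x, s⁆ :=
        fun s hs => (hZ _ (hc s)).orderOf_pos
      set t := ∏ s ∈ S, orderOf ⁅x, s⁆ with htdef
      have htpos : 0 < t := Finset.prod_pos ht0
      have hts : ∀ s ∈ S, ⁅x ^ t, s⁆ = 1 := by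
        intro s hs
        rw [comm_pow x s hc t, ← orderOf_dvd_iff_pow_eq_one]
        exact Finset.dvd_prod_of_mem _ hs
      have hxt : x ^ t ∈ Subgroup.center G := by
        rw [Subgroup.mem_center_iff]
        intro g
        have hg : g ∈ Subgroup.closure (S : Set G) := by rw [hS]; exact Subgroup.mem_top g
        have hcomm : Commute (x ^ t) g := by
          induction hg using Subgroup.closure_induction with
          | mem s hs => exact commutatorElement_eq_one_iff_commute.mp (hts s hs)
          | one => exact Commute.one_right _
          | mul a b _ _ ha hb => exact ha.mul_right hb
          | inv a _ ha => exact ha.inv_right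
        exact hcomm.symm
      have hfin : IsOfFinOrder x :=
        (isOfFinOrder_pow.mp (hZ _ hxt)).resolve_right htpos.ne'
      exact (QuotientGroup.mk' (Subgroup.center G)).isOfFinOrder hfin
    have hQ : Monoid.IsTorsion (G ⧸ Subgroup.center G) := ih inferInstance hZQ
    have hZt : Monoid.IsTorsion (Subgroup.center G) := by
      rintro ⟨z, hz⟩
      obtain ⟨n, hn, hzn⟩ := (hZ z hz).exists_pow_eq_one
      refine isOfFinOrder_iff_pow_eq_one.mpr ⟨n, hn, ?_⟩
      ext
      simpa using hzn
    exact IsTorsion.extension_closed (QuotientGroup.ker_mk' _).symm hQ hZt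

/-- A finitely generated torsion nilpotent group is finite. -/
private lemma finite_of_fg_torsion_nilpotent :
    ∀ (G : Type*) [Group G] [Group.IsNilpotent G], Group.FG G →
      Monoid.IsTorsion G → Finite G := by
  intro G _ _
  apply @nilpotent_center_quotient_ind _ G _ _ <;> clear! G
  · intro G _ _ _ _
    exact Finite.of_injective (fun _ => (0 : Fin 1)) fun a b _ => Subsingleton.elim a b
  · intro G _ _ ih hFG hT
    haveI := hFG
    have hQfin : Finite (G ⧸ Subgroup.center G) :=
      ih inferInstance (IsTorsion.of_surjective (QuotientGroup.mk'_surjective _) hT)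
    haveI := hQfin
    haveI : (Subgroup.center G).FiniteIndex := Subgroup.finiteIndex_of_finite_quotient
    haveI : Group.FG (Subgroup.center G) := Subgroup.fg_of_index_ne_zero _
    haveI : Finite (Subgroup.center G) :=
      CommGroup.finite_of_fg_torsion _ (IsTorsion.subgroup hT _)
    exact Finite.of_equiv _ (Subgroup.groupEquivQuotientProdSubgroup
      (s := Subgroup.center G)).symm

/-- Residual finiteness of finitely generated nilpotent groups. -/
private lemma exists_finiteIndex_normal_notMem (H : Type*) [Group H] [Group.FG H]
    [Group.IsNilpotent H] (g : H) (hg : g ≠ 1) :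
    ∃ W : Subgroup H, W.Normal ∧ W.FiniteIndex ∧ g ∉ W := by
  -- Zorn's lemma: a maximal normal subgroup avoiding g
  have hzorn : ∀ c ⊆ {W : Subgroup H | W.Normal ∧ g ∉ W}, IsChain (· ≤ ·) c → ∀ y ∈ c,
      ∃ ub ∈ {W : Subgroup H | W.Normal ∧ g ∉ W}, ∀ z ∈ c, z ≤ ub := by
    intro c hcs hchain y hy
    have hdir : DirectedOn (· ≤ ·) c := hchain.directedOn
    have hmem : ∀ x : H, x ∈ sSup c ↔ ∃ W ∈ c, x ∈ W := fun x =>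
      Subgroup.mem_sSup_of_directedOn ⟨y, hy⟩ hdir
    refine ⟨sSup c, ⟨⟨fun n hn h => ?_⟩, fun hgs => ?_⟩, fun z hz => le_sSup hz⟩
    · obtain ⟨W, hWc, hnW⟩ := (hmem n).mp hn
      exact (hmem _).mpr ⟨W, hWc, (hcs hWc).1.conj_mem n hnW h⟩
    · obtain ⟨W, hWc, hgW⟩ := (hmem g).mp hgs
      exact (hcs hWc).2 hgW
  obtain ⟨M, -, hM⟩ := zorn_le_nonempty₀ _ hzorn ⊥
    ⟨⟨fun n hn gg => by simpa using hn⟩, by simpa using hg⟩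
  haveI hMnormal : M.Normal := hM.1.1
  have hgM : g ∉ M := hM.1.2
  have hg1 : (QuotientGroup.mk g : H ⧸ M) ≠ 1 := by
    simpa [QuotientGroup.eq_one_iff] using hgM
  -- every nontrivial normal subgroup of H ⧸ M contains the image of g
  have hmono : ∀ V : Subgroup (H ⧸ M), V.Normal → V ≠ ⊥ →
      (QuotientGroup.mk g : H ⧸ M) ∈ V := by
    intro V hV hVbot
    by_contra hgV
    have hcomap : M ≤ Subgroup.comap (QuotientGroup.mk' M) V := by
      intro m hm
      have h1 : (QuotientGroup.mk' M) m = 1 := (QuotientGroup.eq_one_iff m).mpr hm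
      rw [Subgroup.mem_comap, h1]
      exact V.one_mem
    have hle : Subgroup.comap (QuotientGroup.mk' M) V ≤ M :=
      hM.2 ⟨hV.comap _, fun h => hgV h⟩ hcomap
    apply hVbot
    have hVmap : V = Subgroup.map (QuotientGroup.mk' M)
        (Subgroup.comap (QuotientGroup.mk' M) V) :=
      (Subgroup.map_comap_eq_self_of_surjective (QuotientGroup.mk'_surjective M) V).symm
    have h1 : Subgroup.map (QuotientGroup.mk' M) M ≤ ⊥ := by
      rintro _ ⟨m, hm, rfl⟩
      simpa [Subgroup.mem_bot] using (QuotientGroup.eq_one_iff m).mpr hm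
    exact le_bot_iff.mp (hVmap ▸ ((Subgroup.map_mono hle).trans h1))
  -- the center of H ⧸ M is torsion
  have hZ : ∀ z ∈ Subgroup.center (H ⧸ M), IsOfFinOrder z := by
    intro z hz
    by_contra hzinf
    have hinj : Function.Injective fun n : ℤ => z ^ n :=
      injective_zpow_iff_not_isOfFinOrder.mpr hzinf
    have hmem : ∀ m : ℕ, 0 < m →
        (QuotientGroup.mk g : H ⧸ M) ∈ Subgroup.zpowers (z ^ m) := by
      intro m hm
      apply hmono
      · apply normal_of_le_center'
        rintro _ ⟨k, rfl⟩
        exact Subgroup.zpow_mem _ (Subgroup.pow_mem _ hz m) k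
      · rw [Ne, Subgroup.zpowers_eq_bot]
        exact fun h1 => hzinf (isOfFinOrder_iff_pow_eq_one.mpr ⟨m, hm, h1⟩)
    obtain ⟨s, hs⟩ := Subgroup.mem_zpowers_iff.mp (hmem 1 one_pos)
    rw [pow_one] at hs
    have hs0 : s ≠ 0 := by
      rintro rfl
      rw [zpow_zero] at hs
      exact hg1 hs.symm
    obtain ⟨k, hk⟩ := Subgroup.mem_zpowers_iff.mp (hmem (s.natAbs + 1) (Nat.succ_pos _))
    have hzz : z ^ (((s.natAbs : ℤ) + 1) * k) = z ^ s := by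
      rw [zpow_mul]
      rw [← hs] at hk
      rw [← hk]
      norm_cast
    have heq : ((s.natAbs : ℤ) + 1) * k = s := hinj hzz
    have hdvd : ((s.natAbs + 1 : ℕ) : ℤ) ∣ s := ⟨k, by push_cast at heq ⊢; linarith⟩
    have : (s.natAbs + 1) ∣ s.natAbs := Int.natCast_dvd.mp hdvd
    have := Nat.le_of_dvd (by omega) this
    omega
  haveI : Group.IsNilpotent (H ⧸ M) := inferInstance
  have hPt : Monoid.IsTorsion (H ⧸ M) := isTorsion_of_center_torsion _ inferInstance hZ
  have hPfin : Finite (H ⧸ M) := finite_of_fg_torsion_nilpotent _ inferInstance hPt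
  haveI := hPfin
  exact ⟨M, hMnormal, Subgroup.finiteIndex_of_finite_quotient, hgM⟩

/-- Let `G` be a finitely generated group with a central element `σ` of infinite
order (so `⟨σ⟩ ≅ ℤ`).  If `G` admits a surjection `ρ` onto a finitely generated
nilpotent group `N` with `ρ(σ)` of infinite order, then for every `d ≥ 1` the
quotient `G/⟨σ^d⟩` admits a finite quotient in which the image of `σ` has order
exactly `d`; equivalently, `G` has a finite quotient `F_d` that kills `σ^d` and
in which the image of `σ` has order exactly `d`. -/
theorem exists_finite_quotient_with_order_d (G N : Type*) [Group G] [Group N]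
    [Group.FG G] [Group.FG N] [Group.IsNilpotent N]
    (σ : G) (hσ : σ ∈ Subgroup.center G) (hσinf : ¬ IsOfFinOrder σ)
    (ρ : G →* N) (hρ : Function.Surjective ρ) (hρσ : ¬ IsOfFinOrder (ρ σ)) :
    ∀ d : ℕ, 1 ≤ d → ∃ (F : Type) (_ : Group F) (_ : Finite F) (q : G →* F),
      Function.Surjective q ∧ q (σ ^ d) = 1 ∧ orderOf (q σ) = d := by
  intro d hd
  have hxinj : Function.Injective fun n : ℤ => (ρ σ) ^ n :=
    injective_zpow_iff_not_isOfFinOrder.mpr hρσ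
  have hxc : ρ σ ∈ Subgroup.center N := by
    rw [Subgroup.mem_center_iff]
    intro n
    obtain ⟨g, rfl⟩ := hρ n
    rw [← map_mul, ← map_mul, Subgroup.mem_center_iff.mp hσ g]
  have hDle : Subgroup.zpowers (ρ σ ^ d) ≤ Subgroup.center N := by
    rintro _ ⟨k, rfl⟩
    exact Subgroup.zpow_mem _ (Subgroup.pow_mem _ hxc d) k
  haveI hDn : (Subgroup.zpowers (ρ σ ^ d)).Normal := normal_of_le_center' hDle
  have hz : ∀ j : ℕ,
      (QuotientGroup.mk' (Subgroup.zpowers (ρ σ ^ d))) (ρ σ) ^ j = 1 ↔ d ∣ j := by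
    intro j
    rw [← map_pow (QuotientGroup.mk' (Subgroup.zpowers (ρ σ ^ d))) (ρ σ) j,
      QuotientGroup.mk'_apply, QuotientGroup.eq_one_iff]
    constructor
    · intro hmem
      obtain ⟨k, hk⟩ := Subgroup.mem_zpowers_iff.mp hmem
      have hzz : ρ σ ^ ((d : ℤ) * k) = ρ σ ^ (j : ℤ) := by
        rw [zpow_mul, zpow_natCast, zpow_natCast]
        exact hk
      exact Int.natCast_dvd_natCast.mp ⟨k, (hxinj hzz).symm⟩
    · rintro ⟨k, rfl⟩
      exact Subgroup.mem_zpowers_iff.mpr ⟨(k : ℤ), by rw [zpow_natCast, ← pow_mul]⟩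
  have hW : ∀ m : ℕ, 0 < m → m < d →
      ∃ W : Subgroup (N ⧸ Subgroup.zpowers (ρ σ ^ d)), W.Normal ∧ W.FiniteIndex ∧
        (QuotientGroup.mk' (Subgroup.zpowers (ρ σ ^ d))) (ρ σ) ^ m ∉ W := by
    intro m h1 h2
    apply exists_finiteIndex_normal_notMem
    intro h
    have hdm := (hz m).mp h
    have := Nat.le_of_dvd h1 hdm
    omega
  have hι : ∀ m : {m : ℕ // m ∈ Finset.Ico 1 d}, 0 < m.1 ∧ m.1 < d := fun m => by
    have := Finset.mem_Ico.mp m.2; omega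
  choose W hWn hWf hWy using fun m : {m : ℕ // m ∈ Finset.Ico 1 d} =>
    hW m.1 (hι m).1 (hι m).2
  haveI hVfi : (⨅ m, W m).FiniteIndex := Subgroup.finiteIndex_iInf fun m => hWf m
  haveI hVn : (⨅ m, W m).Normal := by
    constructor
    intro n hn h
    rw [Subgroup.mem_iInf] at hn ⊢
    exact fun m => (hWn m).conj_mem _ (hn m) _
  haveI : Finite ((N ⧸ Subgroup.zpowers (ρ σ ^ d)) ⧸ (⨅ m, W m)) :=
    Subgroup.finite_quotient_of_finiteIndex
  have hq0 : ∀ j : ℕ,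
      (QuotientGroup.mk' (⨅ m, W m))
          ((QuotientGroup.mk' (Subgroup.zpowers (ρ σ ^ d))) (ρ σ)) ^ j = 1 ↔ d ∣ j := by
    intro j
    rw [← map_pow (QuotientGroup.mk' (⨅ m, W m)) _ j, QuotientGroup.mk'_apply,
      QuotientGroup.eq_one_iff]
    constructor
    · intro hjV
      by_contra hdj
      have h1 : 0 < j % d := by
        rcases Nat.eq_zero_or_pos (j % d) with h0 | h0
        · exact absurd (Nat.dvd_of_mod_eq_zero h0) hdj
        · exact h0
      have h2 : j % d < d := Nat.mod_lt _ (by omega)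
      have hmod : (QuotientGroup.mk' (Subgroup.zpowers (ρ σ ^ d))) (ρ σ) ^ j =
          (QuotientGroup.mk' (Subgroup.zpowers (ρ σ ^ d))) (ρ σ) ^ (j % d) := by
        conv_lhs => rw [← Nat.mod_add_div j d]
        rw [pow_add, pow_mul, (hz d).mpr dvd_rfl, one_pow, mul_one]
      rw [hmod] at hjV
      exact hWy ⟨j % d, Finset.mem_Ico.mpr ⟨h1, h2⟩⟩ (Subgroup.mem_iInf.mp hjV _)
    · rintro ⟨k, rfl⟩
      rw [pow_mul, (hz d).mpr dvd_rfl, one_pow]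
      exact Subgroup.one_mem _
  -- transport the finite quotient to `Type 0`
  haveI : Small.{0} ((N ⧸ Subgroup.zpowers (ρ σ ^ d)) ⧸ (⨅ m, W m)) :=
    Countable.toSmall _
  let μ : Shrink.{0} ((N ⧸ Subgroup.zpowers (ρ σ ^ d)) ⧸ (⨅ m, W m)) ≃*
      ((N ⧸ Subgroup.zpowers (ρ σ ^ d)) ⧸ (⨅ m, W m)) := Shrink.mulEquiv
  haveI : Finite (Shrink.{0} ((N ⧸ Subgroup.zpowers (ρ σ ^ d)) ⧸ (⨅ m, W m))) :=
    Finite.of_equiv _ μ.symm.toEquiv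
  refine ⟨Shrink.{0} ((N ⧸ Subgroup.zpowers (ρ σ ^ d)) ⧸ (⨅ m, W m)), inferInstance,
    inferInstance,
    μ.symm.toMonoidHom.comp ((QuotientGroup.mk' (⨅ m, W m)).comp
      ((QuotientGroup.mk' (Subgroup.zpowers (ρ σ ^ d))).comp ρ)), ?_, ?_, ?_⟩
  · exact μ.symm.surjective.comp ((QuotientGroup.mk'_surjective _).comp
      ((QuotientGroup.mk'_surjective _).comp hρ))
  · have h1 : (QuotientGroup.mk' (⨅ m, W m))
        ((QuotientGroup.mk' (Subgroup.zpowers (ρ σ ^ d))) (ρ σ)) ^ d = 1 :=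
      (hq0 d).mpr dvd_rfl
    simp only [MonoidHom.comp_apply, map_pow]
    rw [← map_pow μ.symm.toMonoidHom, h1, map_one]
  · simp only [MonoidHom.comp_apply]
    rw [orderOf_injective μ.symm.toMonoidHom μ.symm.injective]
    rw [orderOf_eq_iff (by omega)]
    constructor
    · exact (hq0 d).mpr dvd_rfl
    · intro m hm h0 hcon
      have := Nat.le_of_dvd h0 ((hq0 m).mp hcon)
      omega
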